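/- Let α ∈ (1,2), T > 0, L > 0, and let f : [0,T] × ℝ → ℝ be continuous with |f(t,x) − f(t,y)| ≤ L|x − y| for all t and x, y. Let y₁, y₂ : [0,T] → ℝ be continuous and satisfy yₖ(t) = y_{k,0} + y_{k,1} t + (1/Γ(α)) ∫₀ᵗ (t−s)^{α−1} f(s, yₖ(s)) ds for k = 1, 2 and all t ∈ [0,T]. Then for all t ∈ [0,T], |y₁(t) − y₂(t)| ≤ (|y_{1,0} − y_{2,0}| + t |y_{1,1} − y_{2,1}|) · E_{α,1}(L t^α). -/

import Mathlib

/-- The two-parameter Mittag-Leffler function `E_{α,β}(z) = ∑ₖ zᵏ / Γ(αk + β)`. -/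
noncomputable def mlE (α β z : ℝ) : ℝ := ∑' k : ℕ, z ^ k / Real.Gamma (α * k + β)


open intervalIntegral MeasureTheory

lemma real_beta {a b : ℝ} (ha : 0 < a) (hb : 0 < b) :
    ∫ x in (0:ℝ)..1, x ^ (a-1) * (1-x) ^ (b-1)
      = Real.Gamma a * Real.Gamma b / Real.Gamma (a+b) := by
  have h := Complex.Gamma_mul_Gamma_eq_betaIntegral (s := (a:ℂ)) (t := (b:ℂ))
    (by simpa using ha) (by simpa using hb)
  have hβ : Complex.betaIntegral a b
      = ((∫ x in (0:ℝ)..1, x ^ (a-1) * (1-x) ^ (b-1) : ℝ) : ℂ) := by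
    rw [Complex.betaIntegral, ← intervalIntegral.integral_ofReal]
    refine intervalIntegral.integral_congr fun x hx => ?_
    rw [Set.uIcc_of_le (by norm_num)] at hx
    rw [Complex.ofReal_mul, Complex.ofReal_cpow hx.1 (a-1),
      Complex.ofReal_cpow (show (0:ℝ) ≤ 1 - x by linarith [hx.2]) (b-1)]
    push_cast
    ring_nf
  have hne : (Real.Gamma (a + b) : ℂ) ≠ 0 := by
    exact_mod_cast (Real.Gamma_pos_of_pos (show (0:ℝ) < a + b by linarith)).ne'
  have key : (Real.Gamma a * Real.Gamma b : ℂ)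
      = (Real.Gamma (a+b) : ℂ) * ((∫ x in (0:ℝ)..1, x ^ (a-1) * (1-x) ^ (b-1) : ℝ) : ℂ) := by
    rw [← hβ, ← Complex.Gamma_ofReal, ← Complex.Gamma_ofReal, ← Complex.Gamma_ofReal]
    push_cast
    exact h
  have key2 : Real.Gamma a * Real.Gamma b
      = Real.Gamma (a+b) * ∫ x in (0:ℝ)..1, x ^ (a-1) * (1-x) ^ (b-1) := by
    exact_mod_cast key
  field_simp
  linarith [key2]

lemma kernel_int {a b t : ℝ} (ha : 1 < a) (hb : 0 < b) (ht : 0 ≤ t) :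
    ∫ s in (0:ℝ)..t, (t-s) ^ (a-1) * s ^ (b-1)
      = Real.Gamma a * Real.Gamma b / Real.Gamma (a+b) * t ^ (a+b-1) := by
  rcases ht.eq_or_lt with rfl | ht
  · rw [intervalIntegral.integral_same, Real.zero_rpow (by linarith), mul_zero]
  · have h1 := intervalIntegral.integral_comp_mul_left
      (f := fun s => (t-s) ^ (a-1) * s ^ (b-1)) (a := (0:ℝ)) (b := 1) (c := t) ht.ne'
    simp only [mul_zero, mul_one, smul_eq_mul] at h1
    have h2 : ∫ x in (0:ℝ)..1, (t - t*x) ^ (a-1) * (t*x) ^ (b-1)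
        = t ^ (a-1) * t ^ (b-1) * ∫ x in (0:ℝ)..1, x ^ (b-1) * (1-x) ^ (a-1) := by
      rw [← intervalIntegral.integral_const_mul]
      refine intervalIntegral.integral_congr fun x hx => ?_
      rw [Set.uIcc_of_le (by norm_num)] at hx
      have h3 : t - t*x = t * (1-x) := by ring
      rw [h3, Real.mul_rpow ht.le (by linarith [hx.2]), Real.mul_rpow ht.le hx.1]
      ring
    have h4 : (∫ s in (0:ℝ)..t, (t-s) ^ (a-1) * s ^ (b-1))
        = t * ∫ x in (0:ℝ)..1, (t - t*x) ^ (a-1) * (t*x) ^ (b-1) := by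
      rw [h1]; field_simp
    rw [h4, h2, real_beta hb (by linarith)]
    rw [show t * (t ^ (a-1) * t ^ (b-1) * (Real.Gamma b * Real.Gamma a / Real.Gamma (b+a)))
        = (Real.Gamma b * Real.Gamma a / Real.Gamma (b+a)) * (t ^ (1:ℝ) * t ^ (a-1) * t ^ (b-1))
        by rw [Real.rpow_one]; ring]
    rw [← Real.rpow_add ht, ← Real.rpow_add ht]
    ring_nf

lemma Gamma_ml_pos {α : ℝ} (hα : 0 < α) (k : ℕ) : 0 < Real.Gamma (α * k + 1) :=
  Real.Gamma_pos_of_pos (by positivity)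

lemma Gamma_ml_ge {α : ℝ} (hα : 1 ≤ α) (k : ℕ) :
    (k.factorial : ℝ) ≤ Real.Gamma (α * k + 1) := by
  rcases Nat.eq_zero_or_pos k with rfl | hk
  · simp [Real.Gamma_one]
  · have h1 : Real.Gamma ((k:ℝ) + 1) = k.factorial := Real.Gamma_nat_eq_factorial k
    rw [← h1]
    have hk1 : (1:ℝ) ≤ (k:ℝ) := by exact_mod_cast hk
    have h2 : (2:ℝ) ≤ (k:ℝ) + 1 := by linarith
    rcases eq_or_lt_of_le (show (k:ℝ) + 1 ≤ α * k + 1 by nlinarith) with h | h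
    · rw [h]
    · exact (Real.Gamma_strictMonoOn_Ici (Set.mem_Ici.mpr h2) (Set.mem_Ici.mpr (by nlinarith)) h).le

lemma ml_summable {α x : ℝ} (hα : 1 ≤ α) (hx : 0 ≤ x) :
    Summable (fun k : ℕ => x ^ k / Real.Gamma (α * k + 1)) := by
  refine Summable.of_nonneg_of_le (fun k => by positivity) (fun k => ?_)
    (Real.summable_pow_div_factorial x)
  exact div_le_div_of_nonneg_left (by positivity) (by positivity) (Gamma_ml_ge hα k)

set_option maxHeartbeats 2000000 in
theorem gronwall_separation_bound
    (α T L y₁₀ y₁₁ y₂₀ y₂₁ : ℝ) (hα₁ : 1 < α) (hα₂ : α < 2) (hT : 0 < T) (hL : 0 < L)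
    (f : ℝ → ℝ → ℝ)
    (hf_cont : ContinuousOn (fun p : ℝ × ℝ => f p.1 p.2) (Set.Icc 0 T ×ˢ Set.univ))
    (hf_lip : ∀ t ∈ Set.Icc (0 : ℝ) T, ∀ x y : ℝ, |f t x - f t y| ≤ L * |x - y|)
    (y₁ y₂ : ℝ → ℝ)
    (hy₁cont : ContinuousOn y₁ (Set.Icc 0 T)) (hy₂cont : ContinuousOn y₂ (Set.Icc 0 T))
    (hy₁ : ∀ t ∈ Set.Icc (0 : ℝ) T,
      y₁ t = y₁₀ + y₁₁ * t
        + (1 / Real.Gamma α) * ∫ s in (0 : ℝ)..t, (t - s) ^ (α - 1) * f s (y₁ s))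
    (hy₂ : ∀ t ∈ Set.Icc (0 : ℝ) T,
      y₂ t = y₂₀ + y₂₁ * t
        + (1 / Real.Gamma α) * ∫ s in (0 : ℝ)..t, (t - s) ^ (α - 1) * f s (y₂ s)) :
    ∀ t ∈ Set.Icc (0 : ℝ) T,
      |y₁ t - y₂ t| ≤ (|y₁₀ - y₂₀| + t * |y₁₁ - y₂₁|) * mlE α 1 (L * t ^ α) := by
  intro t₀ ht₀
  have hΓα : 0 < Real.Gamma α := Real.Gamma_pos_of_pos (by linarith)
  set u : ℝ → ℝ := fun t => |y₁ t - y₂ t| with hu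
  have hucont : ContinuousOn u (Set.Icc 0 T) := (hy₁cont.sub hy₂cont).abs
  obtain ⟨x₀, hx₀, hmax⟩ := (isCompact_Icc : IsCompact (Set.Icc (0:ℝ) T)).exists_isMaxOn
    ⟨0, by constructor <;> linarith⟩ hucont
  set M := u x₀ with hMdef
  have hMnn : 0 ≤ M := abs_nonneg _
  have hMb : ∀ s ∈ Set.Icc (0:ℝ) T, u s ≤ M := fun s hs => hmax hs
  -- continuity of the kernel
  have hker : ∀ t : ℝ, Continuous (fun s : ℝ => (t - s) ^ (α - 1)) := by
    intro t
    refine continuous_iff_continuousAt.mpr fun s => ?_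
    exact (Real.continuousAt_rpow_const (t - s) (α - 1) (Or.inr (by linarith))).comp
      ((continuous_const.sub continuous_id).continuousAt)
  have hrpow : ∀ q : ℝ, 0 ≤ q → Continuous (fun s : ℝ => s ^ q) := fun q hq =>
    continuous_iff_continuousAt.mpr fun s => Real.continuousAt_rpow_const _ _ (Or.inr hq)
  have hfy : ∀ (y : ℝ → ℝ), ContinuousOn y (Set.Icc 0 T) →
      ContinuousOn (fun s => f s (y s)) (Set.Icc 0 T) := fun y hy =>
    hf_cont.comp (s := Set.Icc 0 T) (f := fun s => (s, y s)) (continuousOn_id.prodMk hy) (fun s hs => ⟨hs, Set.mem_univ _⟩)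
  have hii : ∀ t ∈ Set.Icc (0:ℝ) T, ∀ g : ℝ → ℝ, ContinuousOn g (Set.Icc 0 T) →
      IntervalIntegrable (fun s => (t - s) ^ (α-1) * g s) MeasureTheory.volume 0 t := by
    intro t ht g hg
    apply ContinuousOn.intervalIntegrable
    rw [Set.uIcc_of_le ht.1]
    exact ((hker t).continuousOn).mul (hg.mono (Set.Icc_subset_Icc le_rfl ht.2))
  have hkernn : ∀ t, ∀ s ∈ Set.Icc (0:ℝ) t, 0 ≤ (t - s) ^ (α - 1) := fun t s hs =>
    Real.rpow_nonneg (by linarith [hs.2]) _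
  -- Step 1 : the basic integral inequality
  have step1 : ∀ t ∈ Set.Icc (0:ℝ) T,
      u t ≤ (|y₁₀ - y₂₀| + t * |y₁₁ - y₂₁|)
        + (1 / Real.Gamma α) * ∫ s in (0:ℝ)..t, (t-s)^(α-1) * (L * u s) := by
    intro t ht
    have i1 := hii t ht _ (hfy y₁ hy₁cont)
    have i2 := hii t ht _ (hfy y₂ hy₂cont)
    have i12 := hii t ht (fun s => f s (y₁ s) - f s (y₂ s)) ((hfy y₁ hy₁cont).sub (hfy y₂ hy₂cont))
    have iR := hii t ht (fun s => L * u s) (continuousOn_const.mul hucont)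
    have hsub : y₁ t - y₂ t = (y₁₀ - y₂₀) + (y₁₁ - y₂₁) * t
        + (1 / Real.Gamma α) * ∫ s in (0:ℝ)..t, (t-s)^(α-1) * (f s (y₁ s) - f s (y₂ s)) := by
      rw [hy₁ t ht, hy₂ t ht,
        show (∫ s in (0:ℝ)..t, (t-s)^(α-1) * (f s (y₁ s) - f s (y₂ s)))
          = (∫ s in (0:ℝ)..t, (t-s)^(α-1) * f s (y₁ s))
            - ∫ s in (0:ℝ)..t, (t-s)^(α-1) * f s (y₂ s) from by
          rw [← intervalIntegral.integral_sub i1 i2]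
          exact intervalIntegral.integral_congr fun s _ => by ring]
      ring
    have habs : |∫ s in (0:ℝ)..t, (t-s)^(α-1) * (f s (y₁ s) - f s (y₂ s))|
        ≤ ∫ s in (0:ℝ)..t, (t-s)^(α-1) * (L * u s) := by
      refine (intervalIntegral.abs_integral_le_integral_abs ht.1).trans ?_
      refine intervalIntegral.integral_mono_on ht.1 i12.abs iR fun s hs => ?_
      rw [abs_mul, abs_of_nonneg (hkernn t s hs)]
      exact mul_le_mul_of_nonneg_left
        (hf_lip s ⟨hs.1, hs.2.trans ht.2⟩ _ _) (hkernn t s hs)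
    calc u t = |(y₁₀ - y₂₀) + (y₁₁ - y₂₁) * t
        + (1 / Real.Gamma α) * ∫ s in (0:ℝ)..t, (t-s)^(α-1) * (f s (y₁ s) - f s (y₂ s))| := by
          show |y₁ t - y₂ t| = _; rw [hsub]
      _ ≤ |y₁₀ - y₂₀| + |(y₁₁ - y₂₁) * t|
          + |(1 / Real.Gamma α) * ∫ s in (0:ℝ)..t, (t-s)^(α-1) * (f s (y₁ s) - f s (y₂ s))| :=
        abs_add_three _ _ _
      _ ≤ (|y₁₀ - y₂₀| + t * |y₁₁ - y₂₁|)
          + (1 / Real.Gamma α) * ∫ s in (0:ℝ)..t, (t-s)^(α-1) * (L * u s) := by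
        rw [abs_mul, abs_of_nonneg ht.1, abs_mul, abs_of_pos (show (0:ℝ) < 1 / Real.Gamma α by positivity)]
        have := mul_le_mul_of_nonneg_left habs (le_of_lt (show (0:ℝ) < 1 / Real.Gamma α by positivity))
        linarith
  -- beta-type integral of the kernel against powers
  have hα0 : (0:ℝ) < α := by linarith
  have hIk : ∀ t ∈ Set.Icc (0:ℝ) T, ∀ k : ℕ,
      (∫ s in (0:ℝ)..t, (t-s)^(α-1) * s^(α*k))
        = Real.Gamma α * Real.Gamma (α*k+1) / Real.Gamma (α*((k:ℝ)+1)+1) * t^(α*((k:ℝ)+1)) := by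
    intro t ht k
    have hb : (0:ℝ) < α*(k:ℝ)+1 := by positivity
    have h := kernel_int (a := α) (b := α*(k:ℝ)+1) hα₁ hb ht.1
    rw [show α*(k:ℝ)+1-1 = α*(k:ℝ) by ring] at h
    rw [h, show α + (α*(k:ℝ)+1) = α*((k:ℝ)+1)+1 by ring]
    norm_num
  have hΓk : ∀ k : ℕ, (0:ℝ) < Real.Gamma (α*(k:ℝ)+1) := fun k =>
    Real.Gamma_pos_of_pos (by positivity)
  -- the iterated bound
  have key : ∀ n : ℕ, ∀ t ∈ Set.Icc (0:ℝ) T,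
      u t ≤ (|y₁₀ - y₂₀| + t * |y₁₁ - y₂₁|)
          * (∑ k ∈ Finset.range n, L^k * t^(α*(k:ℝ)) / Real.Gamma (α*(k:ℝ)+1))
        + M * (L^n * t^(α*(n:ℝ)) / Real.Gamma (α*(n:ℝ)+1)) := by
    intro n
    induction n with
    | zero =>
      intro t ht
      simpa [Real.Gamma_one] using hMb t ht
    | succ n ih =>
      intro t ht
      set at' := |y₁₀ - y₂₀| + t * |y₁₁ - y₂₁| with hat'
      have hat'nn : 0 ≤ at' :=
        add_nonneg (abs_nonneg _) (mul_nonneg ht.1 (abs_nonneg _))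
      set φ : ℝ → ℝ := fun s => at' * (∑ k ∈ Finset.range n, L^k * s^(α*(k:ℝ)) / Real.Gamma (α*(k:ℝ)+1))
          + M * (L^n * s^(α*(n:ℝ)) / Real.Gamma (α*(n:ℝ)+1)) with hφ
      have hφcont : Continuous φ := by
        refine Continuous.add (continuous_const.mul (continuous_finset_sum _ fun k _ => ?_))
          (continuous_const.mul ((continuous_const.mul (hrpow _ (by positivity))).div_const _))
        exact (continuous_const.mul (hrpow _ (by positivity))).div_const _
      have hφle : ∀ s ∈ Set.Icc (0:ℝ) t, u s ≤ φ s := by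
        intro s hs
        have hsT : s ∈ Set.Icc (0:ℝ) T := ⟨hs.1, hs.2.trans ht.2⟩
        refine (ih s hsT).trans (add_le_add (mul_le_mul_of_nonneg_right ?_ ?_) le_rfl)
        · exact add_le_add le_rfl (mul_le_mul_of_nonneg_right hs.2 (abs_nonneg _))
        · exact Finset.sum_nonneg fun k _ => div_nonneg
            (mul_nonneg (pow_nonneg hL.le k) (Real.rpow_nonneg hs.1 _)) (hΓk k).le
      have iu := hii t ht (fun s => L * u s) (continuousOn_const.mul hucont)
      have iφ := hii t ht (fun s => L * φ s) (continuous_const.mul hφcont).continuousOn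
      have mono : (∫ s in (0:ℝ)..t, (t-s)^(α-1) * (L * u s))
          ≤ ∫ s in (0:ℝ)..t, (t-s)^(α-1) * (L * φ s) := by
        refine intervalIntegral.integral_mono_on ht.1 iu iφ fun s hs => ?_
        exact mul_le_mul_of_nonneg_left
          (mul_le_mul_of_nonneg_left (hφle s hs) hL.le) (hkernn t s hs)
      have hintk : ∀ k : ℕ, IntervalIntegrable (fun s => (t-s)^(α-1) * s^(α*(k:ℝ)))
          MeasureTheory.volume 0 t := fun k =>
        hii t ht _ (hrpow _ (by positivity)).continuousOn
      set d : ℕ → ℝ := fun k => L * (if k = n then M else at') * L^k / Real.Gamma (α*(k:ℝ)+1)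
        with hd
      have hfun : ∀ s : ℝ, (t-s)^(α-1) * (L * φ s)
          = ∑ k ∈ Finset.range (n+1), d k * ((t-s)^(α-1) * s^(α*(k:ℝ))) := by
        intro s
        rw [Finset.sum_range_succ, hd]
        simp only [eq_self_iff_true, if_true]
        rw [Finset.sum_congr rfl fun k hk => by
          rw [if_neg (Nat.ne_of_lt (Finset.mem_range.mp hk))]]
        simp only [hφ, mul_add, Finset.mul_sum]
        congr 1
        · exact Finset.sum_congr rfl fun k _ => by ring
        · ring
      have expand : (∫ s in (0:ℝ)..t, (t-s)^(α-1) * (L * φ s))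
          = ∑ k ∈ Finset.range (n+1), d k *
              (Real.Gamma α * Real.Gamma (α*(k:ℝ)+1) / Real.Gamma (α*((k:ℝ)+1)+1) * t^(α*((k:ℝ)+1))) := by
        rw [intervalIntegral.integral_congr (fun s _ => hfun s),
          intervalIntegral.integral_finset_sum fun k _ => (hintk k).const_mul (d k)]
        exact Finset.sum_congr rfl fun k _ => by
          rw [intervalIntegral.integral_const_mul, hIk t ht k]
      have hterm : ∀ k : ℕ, (1 / Real.Gamma α)
            * (d k * (Real.Gamma α * Real.Gamma (α*(k:ℝ)+1) / Real.Gamma (α*((k:ℝ)+1)+1) * t^(α*((k:ℝ)+1))))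
          = (if k = n then M else at') * (L^(k+1) * t^(α*((k:ℝ)+1)) / Real.Gamma (α*((k:ℝ)+1)+1)) := by
        intro k
        have h1 := (hΓk k).ne'
        have h2 : Real.Gamma (α*((k:ℝ)+1)+1) ≠ 0 := (Real.Gamma_pos_of_pos (by positivity)).ne'
        rw [hd]
        field_simp
        ring
      calc u t ≤ at' + (1 / Real.Gamma α) * ∫ s in (0:ℝ)..t, (t-s)^(α-1) * (L * u s) :=
            step1 t ht
        _ ≤ at' + (1 / Real.Gamma α) * ∫ s in (0:ℝ)..t, (t-s)^(α-1) * (L * φ s) := by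
            have h0 : (0:ℝ) ≤ 1 / Real.Gamma α := by positivity
            have := mul_le_mul_of_nonneg_left mono h0
            linarith
        _ = at' + ∑ k ∈ Finset.range (n+1),
              (if k = n then M else at') * (L^(k+1) * t^(α*((k:ℝ)+1)) / Real.Gamma (α*((k:ℝ)+1)+1)) := by
            rw [expand, Finset.mul_sum]
            rw [Finset.sum_congr rfl fun k _ => hterm k]
        _ = at' + ((∑ k ∈ Finset.range n,
              at' * (L^(k+1) * t^(α*((k:ℝ)+1)) / Real.Gamma (α*((k:ℝ)+1)+1)))
            + M * (L^(n+1) * t^(α*((n:ℝ)+1)) / Real.Gamma (α*((n:ℝ)+1)+1))) := by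
            rw [Finset.sum_range_succ, if_pos rfl,
              Finset.sum_congr rfl fun k hk => by
                rw [if_neg (Nat.ne_of_lt (Finset.mem_range.mp hk))]]
        _ = _ := by
            rw [Finset.sum_range_succ']
            push_cast
            rw [← Finset.mul_sum]
            norm_num [Real.rpow_zero, Real.Gamma_one]
            ring
  have hx : (0:ℝ) ≤ L * t₀ ^ α := mul_nonneg hL.le (Real.rpow_nonneg ht₀.1 _)
  have hsum := ml_summable hα₁.le hx
  have hatnn : 0 ≤ |y₁₀ - y₂₀| + t₀ * |y₁₁ - y₂₁| :=
    add_nonneg (abs_nonneg _) (mul_nonneg ht₀.1 (abs_nonneg _))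
  have hpow : ∀ k : ℕ, L^k * t₀^(α*(k:ℝ)) = (L * t₀^α)^k := by
    intro k
    rw [mul_pow, Real.rpow_mul ht₀.1, Real.rpow_natCast]
  have hbound : ∀ n : ℕ, u t₀ ≤ (|y₁₀ - y₂₀| + t₀ * |y₁₁ - y₂₁|) * mlE α 1 (L * t₀^α)
      + M * ((L * t₀^α)^n / Real.Gamma (α*(n:ℝ)+1)) := by
    intro n
    refine (key n t₀ ht₀).trans (add_le_add ?_ ?_)
    · refine mul_le_mul_of_nonneg_left ?_ hatnn
      rw [Finset.sum_congr rfl fun k _ => by rw [hpow k]]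
      simp only [mlE]
      exact Summable.sum_le_tsum (Finset.range n)
        (fun k _ => div_nonneg (pow_nonneg hx k) (hΓk k).le) hsum
    · rw [hpow n]
  have hlim : Filter.Tendsto (fun n : ℕ => (|y₁₀ - y₂₀| + t₀ * |y₁₁ - y₂₁|) * mlE α 1 (L * t₀^α)
      + M * ((L * t₀^α)^n / Real.Gamma (α*(n:ℝ)+1))) Filter.atTop
      (nhds ((|y₁₀ - y₂₀| + t₀ * |y₁₁ - y₂₁|) * mlE α 1 (L * t₀^α) + M * 0)) :=
    tendsto_const_nhds.add (hsum.tendsto_atTop_zero.const_mul M)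
  have hfin := ge_of_tendsto' hlim hbound
  simpa using hfin
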